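/- Let T′ ⊆ ℝ² be the triangle conv{(0, 3/2), (1/4, 0), (1, 0)}. Then: (a) the inequality 2x₁ + x₂ ≥ 2 is valid for every integer point of T′ (indeed T′ ∩ ℤ² = {(1,0)}), and every point of T′ other than (1,0) violates it; (b) 2x₁ + x₂ ≥ 2 is not a split cut for T′: for every π ∈ ℤ² and π₀ ∈ ℤ there exists a point x in {x ∈ T′ : π·x ≤ π₀} ∪ {x ∈ T′ : π·x ≥ π₀ + 1} with 2x₁ + x₂ < 2. -/
import Mathlib


/-- `x` is an integer point. -/
def isInt {n : ℕ} (x : Fin n → ℝ) : Prop := ∀ i, ∃ z : ℤ, x i = (z : ℝ)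

/-- Dot product of an integer vector with a real vector. -/
def rdot {n : ℕ} (c : Fin n → ℤ) (x : Fin n → ℝ) : ℝ := ∑ j, (c j : ℝ) * x j

/-- Let `T' ⊆ ℝ²` be the triangle `conv {(0,3/2), (1/4,0), (1,0)}`. Then
(a) `T' ∩ ℤ² = {(1,0)}`, the inequality `2x₁ + x₂ ≥ 2` is valid for every integer point
of `T'`, and every point of `T'` other than `(1,0)` violates it;
(b) `2x₁ + x₂ ≥ 2` is not a split cut for `T'`: for all `π ∈ ℤ²`, `π₀ ∈ ℤ` there is a
point of `{x ∈ T' : π·x ≤ π₀} ∪ {x ∈ T' : π·x ≥ π₀ + 1}` with `2x₁ + x₂ < 2`. -/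
theorem stmt15 (T : Set (Fin 2 → ℝ))
    (hT : T = convexHull ℝ {![(0:ℝ), 3/2], ![(1:ℝ)/4, 0], ![(1:ℝ), 0]}) :
    ({x ∈ T | isInt x} = {![(1:ℝ), 0]}) ∧
    (∀ x ∈ T, isInt x → 2 * x 0 + x 1 ≥ 2) ∧
    (∀ x ∈ T, x ≠ ![(1:ℝ), 0] → 2 * x 0 + x 1 < 2) ∧
    (∀ π : Fin 2 → ℤ, ∀ π₀ : ℤ,
      ∃ x ∈ T, (rdot π x ≤ (π₀ : ℝ) ∨ (π₀ : ℝ) + 1 ≤ rdot π x) ∧ 2 * x 0 + x 1 < 2) := by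
  subst hT
  set S : Set (Fin 2 → ℝ) := {![(0:ℝ), 3/2], ![(1:ℝ)/4, 0], ![(1:ℝ), 0]} with hS
  -- the three vertices belong to the hull
  have hv1 : ![(0:ℝ), 3/2] ∈ convexHull ℝ S := subset_convexHull ℝ S (by simp [hS])
  have hv2 : ![(1:ℝ)/4, 0] ∈ convexHull ℝ S := subset_convexHull ℝ S (by simp [hS])
  have hv3 : ![(1:ℝ), 0] ∈ convexHull ℝ S := subset_convexHull ℝ S (by simp [hS])
  -- T is contained in three halfspaces
  have hsub : convexHull ℝ S ⊆
      {x : Fin 2 → ℝ | 0 ≤ x 1 ∧ 3 * x 0 + 2 * x 1 ≤ 3 ∧ 3 ≤ 12 * x 0 + 2 * x 1} := by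
    apply convexHull_min
    · intro x hx
      simp only [hS, Set.mem_insert_iff, Set.mem_singleton_iff] at hx
      rcases hx with rfl | rfl | rfl <;> norm_num
    · intro x hx y hy u v hu hv huv
      simp only [Set.mem_setOf_eq, Pi.add_apply, Pi.smul_apply, smul_eq_mul] at *
      refine ⟨by nlinarith, by nlinarith, by nlinarith⟩
  -- strict inequality off the vertex (1,0)
  have hstrict : ∀ x ∈ convexHull ℝ S, x ≠ ![(1:ℝ), 0] → 2 * x 0 + x 1 < 2 := by
    intro x hx hne
    obtain ⟨h1, h2, h3⟩ := hsub hx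
    by_contra hge
    push_neg at hge
    have hx1 : x 1 = 0 := by linarith
    have hx0 : x 0 = 1 := by linarith
    exact hne (by ext i; fin_cases i <;> simp [hx0, hx1])
  -- integer points of T
  have hint : ∀ x ∈ convexHull ℝ S, isInt x → x = ![(1:ℝ), 0] := by
    intro x hx hI
    obtain ⟨z0, hz0⟩ := hI 0
    obtain ⟨z1, hz1⟩ := hI 1
    obtain ⟨h1, h2, h3⟩ := hsub hx
    simp only [hz0, hz1] at h1 h2 h3
    have i1 : 0 ≤ z1 := by exact_mod_cast h1
    have i2 : 3 * z0 + 2 * z1 ≤ 3 := by exact_mod_cast h2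
    have i3 : 3 ≤ 12 * z0 + 2 * z1 := by exact_mod_cast h3
    have hz0' : z0 = 1 := by omega
    have hz1' : z1 = 0 := by omega
    ext i; fin_cases i <;> simp [hz0, hz1, hz0', hz1']
  have hint1 : isInt ![(1:ℝ), 0] := by
    intro i; fin_cases i
    · exact ⟨1, by norm_num⟩
    · exact ⟨0, by norm_num⟩
  refine ⟨?_, ?_, hstrict, ?_⟩
  · ext x
    simp only [Set.mem_setOf_eq, Set.mem_singleton_iff]
    constructor
    · rintro ⟨hx, hI⟩; exact hint x hx hI
    · rintro rfl; exact ⟨hv3, hint1⟩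
  · intro x hx hI
    rw [hint x hx hI]
    norm_num
  · intro π π₀
    -- three candidate points
    have hP2 : ![(1:ℝ)/2, 0] ∈ convexHull ℝ S := by
      have := (convex_convexHull ℝ S) hv2 hv3 (by norm_num : (0:ℝ) ≤ 2/3)
        (by norm_num : (0:ℝ) ≤ 1/3) (by norm_num)
      convert this using 1
      ext i; fin_cases i <;>
        simp [Pi.add_apply, Pi.smul_apply, smul_eq_mul] <;> norm_num
    by_cases c1 : rdot π ![(1:ℝ)/4, 0] ≤ (π₀:ℝ) ∨ (π₀:ℝ) + 1 ≤ rdot π ![(1:ℝ)/4, 0]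
    · exact ⟨![(1:ℝ)/4, 0], hv2, c1, by norm_num⟩
    by_cases c2 : rdot π ![(1:ℝ)/2, 0] ≤ (π₀:ℝ) ∨ (π₀:ℝ) + 1 ≤ rdot π ![(1:ℝ)/2, 0]
    · exact ⟨![(1:ℝ)/2, 0], hP2, c2, by norm_num⟩
    by_cases c3 : rdot π ![(0:ℝ), 3/2] ≤ (π₀:ℝ) ∨ (π₀:ℝ) + 1 ≤ rdot π ![(0:ℝ), 3/2]
    · exact ⟨![(0:ℝ), 3/2], hv1, c3, by norm_num⟩
    exfalso
    push_neg at c1 c2 c3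
    have r1 : rdot π ![(1:ℝ)/4, 0] = (π 0 : ℝ) / 4 := by
      simp [rdot, Fin.sum_univ_two]; ring
    have r2 : rdot π ![(1:ℝ)/2, 0] = (π 0 : ℝ) / 2 := by
      simp [rdot, Fin.sum_univ_two]; ring
    have r3 : rdot π ![(0:ℝ), 3/2] = (π 1 : ℝ) * 3 / 2 := by
      simp [rdot, Fin.sum_univ_two]; ring
    rw [r1] at c1; rw [r2] at c2; rw [r3] at c3
    obtain ⟨a1, a2⟩ := c1
    obtain ⟨b1, b2⟩ := c2
    obtain ⟨d1, d2⟩ := c3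
    have i1 : 4 * π₀ < π 0 := by
      have : ((4 * π₀ : ℤ) : ℝ) < ((π 0 : ℤ) : ℝ) := by push_cast; linarith
      exact_mod_cast this
    have i2 : π 0 < 4 * π₀ + 4 := by
      have : ((π 0 : ℤ) : ℝ) < ((4 * π₀ + 4 : ℤ) : ℝ) := by push_cast; linarith
      exact_mod_cast this
    have i3 : 2 * π₀ < π 0 := by
      have : ((2 * π₀ : ℤ) : ℝ) < ((π 0 : ℤ) : ℝ) := by push_cast; linarith
      exact_mod_cast this
    have i4 : π 0 < 2 * π₀ + 2 := by
      have : ((π 0 : ℤ) : ℝ) < ((2 * π₀ + 2 : ℤ) : ℝ) := by push_cast; linarith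
      exact_mod_cast this
    have i5 : 2 * π₀ < 3 * π 1 := by
      have : ((2 * π₀ : ℤ) : ℝ) < ((3 * π 1 : ℤ) : ℝ) := by push_cast; linarith
      exact_mod_cast this
    have i6 : 3 * π 1 < 2 * π₀ + 2 := by
      have : ((3 * π 1 : ℤ) : ℝ) < ((2 * π₀ + 2 : ℤ) : ℝ) := by push_cast; linarith
      exact_mod_cast this
    omega
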